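/- Let α_AA = γ/(1 + r° + (1/2)r°ψ(κ°)) be the symmetric rational equilibrium coefficient, and let Ū(α) = E[s²]·(αγ − (1/2)r°α² − (1/2)r°ψ(κ°)·α·(γ − (1/2)r°ψ(κ°)α)/(1+r°) − (1/2)α²) be the objective payoff of playing α against a rational best responder. Then Ū′(α_AA) = E[s²]·(r°ψ(κ°)/2)·(γψ(κ°)r°/2)/((1+r°)(1+r°+(1/2)ψ(κ°)r°)) > 0. In particular, marginally more aggressive play than the symmetric Nash coefficient strictly raises objective payoff against a rational best responder. -/
import Mathlib


/-- the derivative of the objective payoff against a rational best responder,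
evaluated at the symmetric rational equilibrium coefficient α_AA, equals
E[s²](r°ψ/2)(γψr°/2)/((1+r°)(1+r°+(1/2)ψr°)) and is strictly positive. -/
theorem derivative_at_nash_positive (Es2 γ r ψ : ℝ) (hE : 0 < Es2) (hγ : 0 < γ)
    (hr : 0 < r) (hψ : ψ ∈ Set.Ioc (0:ℝ) 1)
    (Ubar : ℝ → ℝ)
    (hUbar : ∀ α, Ubar α = Es2 * (α * γ - (1/2) * r * α^2
      - (1/2) * r * ψ * α * ((γ - (1/2) * r * ψ * α) / (1 + r)) - (1/2) * α^2)) :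
    HasDerivAt Ubar
      (Es2 * ((r * ψ / 2) * ((γ * ψ * r / 2) / ((1 + r) * (1 + r + (1/2) * ψ * r)))))
      (γ / (1 + r + (1/2) * r * ψ)) ∧
    0 < Es2 * ((r * ψ / 2) * ((γ * ψ * r / 2) / ((1 + r) * (1 + r + (1/2) * ψ * r)))) := by
  obtain ⟨hψ0, hψ1⟩ := hψ
  have hr1 : (0:ℝ) < 1 + r := by linarith
  have hden : (0:ℝ) < 1 + r + (1/2) * ψ * r := by nlinarith
  have hden' : (0:ℝ) < 1 + r + (1/2) * r * ψ := by nlinarith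
  set x := γ / (1 + r + (1/2) * r * ψ) with hx
  set A := Es2 * (γ - (1/2) * r * ψ * γ / (1 + r)) with hA
  set B := Es2 * (-(1/2) * r + (1/4) * r^2 * ψ^2 / (1 + r) - 1/2) with hB
  have hfun : Ubar = fun α => A * α + B * α^2 := by
    funext α
    rw [hUbar, hA, hB]
    field_simp
    ring
  have hd : HasDerivAt (fun α : ℝ => A * α + B * α^2)
      (A * 1 + B * (↑2 * x ^ 1)) x :=
    ((hasDerivAt_id x).const_mul A).add ((hasDerivAt_pow 2 x).const_mul B)
  constructor
  · rw [hfun]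
    convert hd using 1
    rw [hA, hB, hx]
    field_simp
    ring
  · have : 0 < (γ * ψ * r / 2) / ((1 + r) * (1 + r + (1/2) * ψ * r)) := by positivity
    positivity
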